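/- Let I be a subset of the real interval [0,1] that satisfies the descending chain condition. Then the set D(I) := { a ∈ ℝ : a ≤ 1 and a = (m − 1 + f)/m for some positive integer m and some f ∈ I_+ } also satisfies the descending chain condition. -/

import Mathlib

/-- A set of real numbers satisfies the descending chain condition (DCC) if it
contains no infinite strictly decreasing sequence. -/
def SatisfiesDCC (S : Set ℝ) : Prop :=
  ¬ ∃ f : ℕ → ℝ, (∀ n, f n ∈ S) ∧ ∀ n, f (n + 1) < f n

/-- For `I ⊆ [0,1]`, the set `I_+` of `0` together with all finite sums of
elements of `I`. -/
def IPlus (I : Set ℝ) : Set ℝ :=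
  {0} ∪ {j | ∃ ℓ : ℕ, 0 < ℓ ∧ ∃ i : Fin ℓ → ℝ, (∀ p, i p ∈ I) ∧ j = ∑ p, i p}

/-- `D(I) = { a ≤ 1 : a = (m - 1 + f)/m, m ∈ ℕ⁺, f ∈ I_+ }`. -/
def DSet (I : Set ℝ) : Set ℝ :=
  {a | a ≤ 1 ∧ ∃ m : ℕ, 0 < m ∧ ∃ f ∈ IPlus I, a = ((m : ℝ) - 1 + f) / m}

lemma satisfiesDCC_iff_isWF (S : Set ℝ) : SatisfiesDCC S ↔ S.IsWF := by
  rw [Set.isWF_iff_no_descending_seq]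
  constructor
  · intro h f hf hmem
    exact h ⟨f, fun n => hmem n, fun n => hf (Nat.lt_succ_self n)⟩
  · rintro h ⟨f, hmem, hdec⟩
    exact h f (strictAnti_nat_of_succ_lt hdec) hmem

lemma iPlus_subset_closure (I : Set ℝ) : IPlus I ⊆ (AddSubmonoid.closure I : Set ℝ) := by
  rintro x (hx | ⟨ℓ, hℓ, i, hi, rfl⟩)
  · simp only [Set.mem_singleton_iff] at hx
    simp [hx, AddSubmonoid.zero_mem]
  · exact AddSubmonoid.sum_mem _ fun p _ => AddSubmonoid.subset_closure (hi p)

lemma iPlus_isWF (I : Set ℝ) (hI : I ⊆ Set.Icc 0 1) (hDCC : SatisfiesDCC I) :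
    (IPlus I).IsWF := by
  rw [← Set.isPWO_iff_isWF]
  refine Set.IsPWO.mono ?_ (iPlus_subset_closure I)
  exact Set.IsPWO.addSubmonoid_closure (fun x hx => (hI hx).1)
    ((Set.isPWO_iff_isWF.mpr ((satisfiesDCC_iff_isWF I).mp hDCC)))

lemma iPlus_nonneg (I : Set ℝ) (hI : I ⊆ Set.Icc 0 1) {x : ℝ} (hx : x ∈ IPlus I) :
    0 ≤ x := by
  rcases hx with hx | ⟨ℓ, hℓ, i, hi, rfl⟩
  · simp only [Set.mem_singleton_iff] at hx; simp [hx]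
  · exact Finset.sum_nonneg fun p _ => (hI (hi p)).1

theorem DSet_satisfiesDCC (I : Set ℝ) (hI : I ⊆ Set.Icc 0 1)
    (hDCC : SatisfiesDCC I) : SatisfiesDCC (DSet I) := by
  rintro ⟨a, hmem, hdec⟩
  -- shift so that all terms are < 1
  set b : ℕ → ℝ := fun n => a (n + 1) with hb
  have hbdec : StrictAnti b := strictAnti_nat_of_succ_lt fun n => hdec (n + 1)
  have hblt1 : ∀ n, b n < 1 := fun n =>
    lt_of_lt_of_le (hbdec.antitone (Nat.zero_le n) |>.trans_lt (hdec 0)) (hmem 0).1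
  -- choose data
  choose m hm f hf hrepr using fun n => (hmem (n + 1)).2
  have hmpos : ∀ n, (0 : ℝ) < m n := fun n => by exact_mod_cast hm n
  have hbeq : ∀ n, b n = ((m n : ℝ) - 1 + f n) / m n := fun n => hrepr n
  have hf1 : ∀ n, f n ≤ 1 := by
    intro n
    have h1 : b n ≤ 1 := (hmem (n + 1)).1
    rw [hbeq n, div_le_one (hmpos n)] at h1
    linarith
  -- 1 - b n = (1 - f n) / m n
  have key : ∀ n, 1 - b n = (1 - f n) / m n := by
    intro n
    rw [hbeq n, eq_div_iff (hmpos n).ne', sub_mul, div_mul_cancel₀ _ (hmpos n).ne']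
    ring
  set c : ℝ := 1 - b 0 with hc
  have hcpos : 0 < c := by have := hblt1 0; rw [hc]; linarith
  -- m is bounded
  have hmb : ∀ n, (m n : ℝ) ≤ 1 / c := by
    intro n
    have h1 : c ≤ 1 - b n := by
      have := hbdec.antitone (Nat.zero_le n)
      simp only [hc]; linarith
    rw [key n] at h1
    have h2 : c * m n ≤ 1 - f n := by
      rw [le_div_iff₀ (hmpos n)] at h1
      linarith [h1]
    have h3 : 1 - f n ≤ 1 := by
      have := iPlus_nonneg I hI (hf n); linarith
    rw [le_div_iff₀ hcpos]
    nlinarith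
  -- pigeonhole: some value M of m occurs infinitely often
  obtain ⟨M, hMinf⟩ : ∃ M : ℕ, {n | m n = M}.Infinite := by
    by_contra h
    push_neg at h
    have : (Set.univ : Set ℕ).Finite := by
      have hsub : (Set.univ : Set ℕ) ⊆ ⋃ M ∈ Finset.range (⌈(1:ℝ)/c⌉₊ + 1), {n | m n = M} := by
        intro n _
        simp only [Set.mem_iUnion, Set.mem_setOf_eq, Finset.mem_range]
        refine ⟨m n, ?_, rfl⟩
        have := hmb n
        have : (m n : ℝ) ≤ (⌈(1:ℝ)/c⌉₊ : ℝ) := this.trans (Nat.le_ceil _)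
        exact Nat.lt_succ_of_le (by exact_mod_cast this)
      exact Set.Finite.subset (Set.Finite.biUnion (Finset.finite_toSet _) fun M _ => h M) hsub
    exact Set.infinite_univ this
  -- extract subsequence with constant m
  set φ : ℕ → ℕ := Nat.nth (fun n => m n = M) with hφ
  have hφmono : StrictMono φ := Nat.nth_strictMono hMinf
  have hφM : ∀ k, m (φ k) = M := fun k => Nat.nth_mem_of_infinite hMinf k
  -- f ∘ φ is strictly decreasing in IPlus I
  have hfd : ∀ k, f (φ (k + 1)) < f (φ k) := by
    intro k
    have hb' : b (φ (k + 1)) < b (φ k) := hbdec (hφmono (Nat.lt_succ_self k))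
    rw [hbeq, hbeq, hφM, hφM] at hb'
    have hMpos : (0 : ℝ) < M := by rw [← hφM 0]; exact hmpos (φ 0)
    rw [div_lt_div_iff₀ hMpos hMpos] at hb'
    nlinarith
  have := (satisfiesDCC_iff_isWF (IPlus I)).mpr (iPlus_isWF I hI hDCC)
  exact this ⟨fun k => f (φ k), fun k => hf (φ k), hfd⟩
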